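/- The guessing number of the negative clique satisfies g(K_n^-, s) = log_s |B(n, ⌊n(s−1)/2⌋, s)|, where B(n,w,s) = {x ∈ [s]^n : Σ x_i = w}. In particular for s = 2, g(K_n^-, 2) = log_2 C(n, ⌊n/2⌋). -/

import Mathlib

/-- `f ∈ F(K_n^-, s)`: each `f_i` is monotone w.r.t. `≤ᵢ`, where `x ≤ᵢ y` iff
`x_j ≥ y_j` for all `j ≠ i`. -/
def memFnegClique {n s : ℕ} (f : (Fin n → Fin s) → Fin n → Fin s) : Prop :=
  ∀ (i : Fin n) (x y : Fin n → Fin s), (∀ j, j ≠ i → y j ≤ x j) → f x i ≤ f y i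

namespace Stmt9Aux

variable {n s : ℕ}

def rk (x : Fin n → Fin s) : ℕ := ∑ i, (x i : ℕ)

def R1 (p q : Fin n → Fin s) : Prop := p ≤ q ∧ rk q = rk p + 1

def fv (hs : 0 < s) (j : ℕ) : Fin s := ⟨min j (s-1), by omega⟩

lemma fv_val (hs : 0 < s) {j : ℕ} (hj : j ≤ s - 1) : ((fv hs j : Fin s) : ℕ) = j := by
  simp [fv]; omega

lemma rk_snoc (p : Fin n → Fin s) (a : Fin s) :
    rk (Fin.snoc p a : Fin (n+1) → Fin s) = rk p + (a : ℕ) := by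
  unfold rk
  rw [Fin.sum_univ_castSucc]
  simp

lemma snoc_le_snoc {p q : Fin n → Fin s} {a b : Fin s} (h1 : p ≤ q) (h2 : a ≤ b) :
    (Fin.snoc p a : Fin (n+1) → Fin s) ≤ (Fin.snoc q b : Fin (n+1) → Fin s) := by
  intro i
  induction i using Fin.lastCases with
  | last => simpa using h2
  | cast i => simpa using h1 i

lemma snoc_inj {p q : Fin n → Fin s} {a b : Fin s}
    (h : (Fin.snoc p a : Fin (n+1) → Fin s) = (Fin.snoc q b : Fin (n+1) → Fin s)) :
    p = q ∧ a = b := by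
  constructor
  · funext i
    have := congrFun h i.castSucc
    simpa using this
  · have := congrFun h (Fin.last n)
    simpa using this

lemma rk_mono {p q : Fin n → Fin s} (h : p ≤ q) : rk p ≤ rk q :=
  Finset.sum_le_sum (fun i _ => h i)

lemma rk_lt_of_mem_tail : ∀ {c : List (Fin n → Fin s)} {p q : Fin n → Fin s},
    List.Chain' R1 (p :: c) → q ∈ c → rk p < rk q := by
  intro c
  induction c with
  | nil => intro p q _ hq; simp at hq
  | cons b l ih =>
    intro p q hc hq
    obtain ⟨-, hpb⟩ : R1 p b := (List.isChain_cons_cons.mp hc).1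
    rcases List.mem_cons.mp hq with rfl | hq
    · omega
    · have := ih (List.isChain_cons_cons.mp hc).2 hq
      omega

lemma rk_head_le_getLast : ∀ {c : List (Fin n → Fin s)} (hne : c ≠ []),
    List.Chain' R1 c → rk (c.head hne) ≤ rk (c.getLast hne) := by
  intro c
  induction c with
  | nil => intro h; exact absurd rfl h
  | cons a l ih =>
    intro _ hc
    cases l with
    | nil => simp
    | cons b m =>
      obtain ⟨-, h1⟩ : R1 a b := (List.isChain_cons_cons.mp hc).1
      have h2 := ih (by simp) (List.isChain_cons_cons.mp hc).2
      rw [List.getLast_cons (by simp)]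
      simp only [List.head_cons] at h2 ⊢
      omega

lemma exists_mid : ∀ {c : List (Fin n → Fin s)} (hne : c ≠ []),
    List.Chain' R1 c → ∀ t, rk (c.head hne) ≤ t → t ≤ rk (c.getLast hne) →
    ∃ m ∈ c, rk m = t := by
  intro c
  induction c with
  | nil => intro h; exact absurd rfl h
  | cons a l ih =>
    intro _ hc t h1 h2
    simp only [List.head_cons] at h1
    rcases eq_or_lt_of_le h1 with heq | hlt
    · exact ⟨a, by simp, heq⟩
    · cases l with
      | nil => simp at h2; omega
      | cons b m =>
        obtain ⟨-, hab⟩ : R1 a b := (List.isChain_cons_cons.mp hc).1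
        obtain ⟨x, hx, hxt⟩ := ih (by simp) (List.isChain_cons_cons.mp hc).2 t
          (by simp only [List.head_cons]; omega)
          (by rwa [List.getLast_cons (by simp)] at h2)
        exact ⟨x, by simp [hx], hxt⟩


variable (hs : 0 < s)

def hook (p : Fin n → Fin s) (rest : List (Fin n → Fin s)) (k : ℕ) :
    List (Fin (n+1) → Fin s) :=
  ((List.range (s - k)).map fun j => (Fin.snoc p (fv hs j) : Fin (n+1) → Fin s)) ++
    (rest.map fun q => (Fin.snoc q (fv hs (s - 1 - k)) : Fin (n+1) → Fin s))

def hooks : List (Fin n → Fin s) → ℕ → List (List (Fin (n+1) → Fin s))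
  | [], _ => []
  | p :: rest, k => if k < s then hook hs p rest k :: hooks rest (k+1) else []

/-- shape of elements of hooks -/
lemma mem_hooks_shape : ∀ {c : List (Fin n → Fin s)} {k : ℕ}
    {h : List (Fin (n+1) → Fin s)} {x : Fin (n+1) → Fin s},
    h ∈ hooks hs c k → x ∈ h →
    ∃ q ∈ c, ∃ j : ℕ, j + k + 1 ≤ s ∧ x = (Fin.snoc q (fv hs j) : Fin (n+1) → Fin s) := by
  intro c
  induction c with
  | nil => intro k h x hh; simp [hooks] at hh
  | cons p rest ih =>
    intro k h x hh hx
    simp only [hooks] at hh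
    by_cases hk : k < s
    · rw [if_pos hk] at hh
      rcases List.mem_cons.mp hh with rfl | hh
      · rcases List.mem_append.mp hx with hx | hx
        · obtain ⟨j, hj, rfl⟩ := List.mem_map.mp hx
          simp only [List.mem_range] at hj
          exact ⟨p, by simp, j, by omega, rfl⟩
        · obtain ⟨q, hq, rfl⟩ := List.mem_map.mp hx
          exact ⟨q, by simp [hq], s - 1 - k, by omega, rfl⟩
      · obtain ⟨q, hq, j, hj, rfl⟩ := ih hh hx
        exact ⟨q, by simp [hq], j, by omega, rfl⟩
    · rw [if_neg hk] at hh; simp at hh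

/-- coverage -/
lemma hooks_cover : ∀ {c : List (Fin n → Fin s)} {k : ℕ} {q : Fin n → Fin s} (j : ℕ),
    q ∈ c → j + k + 1 ≤ s →
    ∃ h ∈ hooks hs c k, (Fin.snoc q (fv hs j) : Fin (n+1) → Fin s) ∈ h := by
  intro c
  induction c with
  | nil => intro k q j hq; simp at hq
  | cons p rest ih =>
    intro k q j hq hj
    have hk : k < s := by omega
    simp only [hooks, if_pos hk]
    rcases List.mem_cons.mp hq with rfl | hq
    · refine ⟨hook hs q rest k, by simp, ?_⟩
      apply List.mem_append.mpr
      left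
      exact List.mem_map.mpr ⟨j, List.mem_range.mpr (by omega), rfl⟩
    · by_cases hj2 : j + k + 2 ≤ s
      · obtain ⟨h, hh, hxh⟩ := ih (k := k+1) j hq (by omega)
        exact ⟨h, by simp [hh], hxh⟩
      · have : j = s - 1 - k := by omega
        subst this
        refine ⟨hook hs p rest k, by simp, ?_⟩
        apply List.mem_append.mpr
        right
        exact List.mem_map.mpr ⟨q, hq, rfl⟩

lemma fv_le_fv {a b : ℕ} (h : a ≤ b) : fv hs a ≤ fv hs b := by
  simp only [fv, Fin.mk_le_mk]; omega

/-- each hook is a nonempty symmetric skipless chain -/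
lemma hooks_good (N : ℕ) : ∀ {c : List (Fin n → Fin s)} {k : ℕ},
    List.Chain' R1 c →
    (∀ (hne : c ≠ []), rk (c.head hne) + rk (c.getLast hne) = N + k) →
    ∀ h ∈ hooks hs c k, h ≠ [] ∧ List.Chain' R1 h ∧
      (∀ a ∈ h.head?, ∀ b ∈ h.getLast?, rk a + rk b = N + (s - 1)) := by
  intro c
  induction c with
  | nil => intro k _ _ h hh; simp [hooks] at hh
  | cons p rest ih =>
    intro k hc hsym h hh
    simp only [hooks] at hh
    by_cases hk : k < s
    swap
    · rw [if_neg hk] at hh; simp at hh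
    rw [if_pos hk] at hh
    rcases List.mem_cons.mp hh with rfl | hh
    swap
    · -- recursive case
      rcases List.eq_nil_or_concat rest with rfl | -
      · simp [hooks] at hh
      · have hrest : rest ≠ [] := by
          rintro rfl; simp [hooks] at hh
        obtain ⟨q, m, rfl⟩ : ∃ q m, rest = q :: m := by
          cases rest with
          | nil => exact absurd rfl hrest
          | cons q m => exact ⟨q, m, rfl⟩
        refine ih (List.isChain_cons_cons.mp hc).2 ?_ h hh
        intro hne
        obtain ⟨-, hpq⟩ : R1 p q := (List.isChain_cons_cons.mp hc).1
        have hsym' := hsym (by simp)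
        rw [List.getLast_cons (by simp)] at hsym'
        simp only [List.head_cons] at hsym' ⊢
        omega
    · -- h is the hook itself
      set t := s - k - 1 with ht
      have hsk : s - k = t + 1 := by omega
      have hL1 : ((List.range (s - k)).map
          fun j => (Fin.snoc p (fv hs j) : Fin (n+1) → Fin s)) ≠ [] := by
        simp [hsk]
      refine ⟨?_, ?_, ?_⟩
      · simp only [hook]
        intro habs
        rcases List.append_eq_nil_iff.mp habs with ⟨h1, -⟩
        exact hL1 h1
      · -- Chain'
        rw [hook]; simp only [List.Chain']; rw [List.isChain_append]
        refine ⟨?_, ?_, ?_⟩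
        · rw [List.isChain_map, hsk, List.isChain_range_succ]
          intro m hm
          refine ⟨snoc_le_snoc le_rfl (fv_le_fv hs (by omega)), ?_⟩
          rw [rk_snoc, rk_snoc, fv_val hs (by omega), fv_val hs (by omega)]
          omega
        · rw [List.isChain_map]
          apply List.IsChain.imp ?_ (List.IsChain.tail hc : List.IsChain R1 rest)
          intro a b hab
          exact ⟨snoc_le_snoc hab.1 le_rfl, by rw [rk_snoc, rk_snoc, hab.2]; omega⟩
        · -- junction
          intro x hx y hy
          rw [List.getLast?_map] at hx
          rw [List.head?_map] at hy
          cases rest with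
          | nil => simp at hy
          | cons q m =>
            simp only [List.head?_cons, Option.map_some, Option.mem_def,
              Option.some.injEq] at hy
            rw [hsk, List.range_succ, List.getLast?_concat] at hx
            simp only [Option.map_some, Option.mem_def, Option.some.injEq] at hx
            subst hx; subst hy
            obtain ⟨hle, hrk⟩ : R1 p q := (List.isChain_cons_cons.mp hc).1
            have htt : t = s - 1 - k := by omega
            refine ⟨htt ▸ snoc_le_snoc hle le_rfl, ?_⟩
            rw [rk_snoc, rk_snoc, fv_val hs (by omega), fv_val hs (by omega)]
            omega
      · -- symmetry
        intro a ha b hb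
        rw [hook, List.head?_append] at ha
        have hhd : ((List.range (s - k)).map
            fun j => (Fin.snoc p (fv hs j) : Fin (n+1) → Fin s)).head? =
            some (Fin.snoc p (fv hs 0)) := by
          rw [List.head?_map, hsk, List.range_succ_eq_map]
          simp
        rw [hhd] at ha
        simp only [Option.or_some, Option.some_or, Option.mem_def, Option.some.injEq] at ha
        subst ha
        rw [hook, List.getLast?_append] at hb
        have hgl1 : ((List.range (s - k)).map
            fun j => (Fin.snoc p (fv hs j) : Fin (n+1) → Fin s)).getLast? =
            some (Fin.snoc p (fv hs t)) := by
          rw [List.getLast?_map, hsk, List.range_succ, List.getLast?_concat]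
          simp
        cases rest with
        | nil =>
          simp only [List.map_nil, List.getLast?_nil, Option.none_or] at hb
          rw [hgl1] at hb
          simp only [Option.mem_def, Option.some.injEq] at hb
          subst hb
          have hsym' := hsym (by simp)
          simp only [List.head_cons, List.getLast_singleton] at hsym'
          rw [rk_snoc, rk_snoc, fv_val hs (by omega), fv_val hs (by omega)]
          omega
        | cons q m =>
          have hgl2 : ((q :: m).map
              fun r => (Fin.snoc r (fv hs (s - 1 - k)) : Fin (n+1) → Fin s)).getLast? =
              some (Fin.snoc ((q :: m).getLast (by simp)) (fv hs (s - 1 - k))) := by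
            rw [List.getLast?_map, List.getLast?_eq_getLast (by simp)]
            simp
          rw [hgl2] at hb
          rw [show ∀ (o : Option (Fin (n+1) → Fin s)) (z), (some z).or o = some z from fun _ _ => rfl] at hb
          simp only [Option.mem_def, Option.some.injEq] at hb
          subst hb
          have hsym' := hsym (by simp)
          rw [List.getLast_cons (by simp)] at hsym'
          simp only [List.head_cons] at hsym'
          rw [rk_snoc, rk_snoc, fv_val hs (by omega), fv_val hs (by omega)]
          omega

/-- disjointness of lists -/
def Disj {β : Type*} (c d : List β) : Prop := ∀ x, x ∈ c → x ∉ d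

lemma hooks_pairwise : ∀ {c : List (Fin n → Fin s)} {k : ℕ},
    List.Chain' R1 c → List.Pairwise (Disj) (hooks hs c k) := by
  intro c
  induction c with
  | nil => intro k _; simp [hooks]
  | cons p rest ih =>
    intro k hc
    simp only [hooks]
    by_cases hk : k < s
    swap
    · rw [if_neg hk]; simp
    rw [if_pos hk]
    refine List.pairwise_cons.mpr ⟨?_, ih (List.IsChain.tail hc)⟩
    intro h' hh' x hx hx'
    obtain ⟨q', hq', j', hj', rfl⟩ := mem_hooks_shape hs hh' hx'
    rcases List.mem_append.mp hx with hx | hx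
    · obtain ⟨j, hj, heq⟩ := List.mem_map.mp hx
      obtain ⟨rfl, -⟩ := snoc_inj heq.symm
      exact absurd rfl (ne_of_lt (rk_lt_of_mem_tail hc hq'))
    · obtain ⟨q, hq, heq⟩ := List.mem_map.mp hx
      obtain ⟨rfl, hfv⟩ := snoc_inj heq.symm
      have h1 : ((fv hs j' : Fin s) : ℕ) = j' := fv_val hs (by omega)
      have h2 : ((fv hs (s - 1 - k) : Fin s) : ℕ) = s - 1 - k := fv_val hs (by omega)
      rw [hfv] at h1
      omega

lemma bind_pairwise {D : List (List (Fin n → Fin s))}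
    (hch : ∀ c ∈ D, List.Chain' R1 c) (hD : D.Pairwise Disj) :
    (D.flatMap (fun c => hooks hs c 0)).Pairwise Disj := by
  induction D with
  | nil => simp
  | cons c D' ih =>
    rw [List.flatMap_cons, List.pairwise_append]
    refine ⟨hooks_pairwise hs (hch c (by simp)), ih (fun d hd => hch d (by simp [hd]))
      (List.pairwise_cons.mp hD).2, ?_⟩
    intro h hh h' hh' x hx hx'
    obtain ⟨q, hq, j, hj, rfl⟩ := mem_hooks_shape hs hh hx
    obtain ⟨d, hd, hh'd⟩ := List.mem_flatMap.mp hh'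
    obtain ⟨q', hq', j', hj', heq⟩ := mem_hooks_shape hs hh'd hx'
    obtain ⟨rfl, -⟩ := snoc_inj heq
    exact (List.pairwise_cons.mp hD).1 d hd q hq hq'

/-- a good symmetric chain decomposition -/
def goodDecomp (n : ℕ) (s : ℕ) (D : List (List (Fin n → Fin s))) : Prop :=
  (∀ c ∈ D, c ≠ [] ∧ List.Chain' R1 c ∧
    ∀ a ∈ c.head?, ∀ b ∈ c.getLast?, rk a + rk b = n * (s - 1)) ∧
  (∀ x : Fin n → Fin s, ∃ c ∈ D, x ∈ c) ∧
  D.Pairwise Disj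

end Stmt9Aux
namespace Stmt9Aux
lemma exists_goodDecomp {s : ℕ} (hs : 0 < s) : ∀ n : ℕ, ∃ D : List (List (Fin n → Fin s)), goodDecomp n s D := by
  intro n
  induction n with
  | zero =>
    refine ⟨[[fun i => i.elim0]], ⟨?_, ?_, ?_⟩⟩
    · intro c hc
      simp only [List.mem_singleton] at hc
      subst hc
      refine ⟨by simp, by simp [List.Chain'], ?_⟩
      intro a ha b hb
      simp only [List.head?_cons, Option.mem_def, Option.some.injEq] at ha
      simp only [List.getLast?_singleton, Option.mem_def, Option.some.injEq] at hb
      subst ha; subst hb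
      simp [rk]
    · intro x
      have hx : x = fun i : Fin 0 => i.elim0 := by funext i; exact i.elim0
      exact ⟨[fun i => i.elim0], by simp, by simp [hx]⟩
    · simp
  | succ n ihn =>
    obtain ⟨D, hDg, hDcov, hDpw⟩ := ihn
    refine ⟨D.flatMap (fun c => hooks hs c 0), ⟨?_, ?_, ?_⟩⟩
    · intro h hh
      obtain ⟨c, hc, hhc⟩ := List.mem_flatMap.mp hh
      obtain ⟨hne, hch, hsym⟩ := hDg c hc
      have := hooks_good hs (n * (s-1)) hch ?_ h hhc
      · refine ⟨this.1, this.2.1, ?_⟩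
        intro a ha b hb
        have := this.2.2 a ha b hb
        have hmul : (n+1) * (s-1) = n * (s-1) + (s-1) := by ring
        omega
      · intro hne'
        have h1 := hsym (c.head hne') (List.head?_eq_head hne' ▸ rfl)
          (c.getLast hne') (List.getLast?_eq_getLast hne' ▸ rfl)
        omega
    · intro x
      obtain ⟨c, hc, hqc⟩ := hDcov (Fin.init x)
      obtain ⟨h, hh, hxh⟩ := hooks_cover hs (k := 0) ((x (Fin.last n) : ℕ)) hqc
        (by have := (x (Fin.last n)).isLt; omega)
      refine ⟨h, List.mem_flatMap.mpr ⟨c, hc, hh⟩, ?_⟩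
      have : (fv hs ((x (Fin.last n) : ℕ)) : Fin s) = x (Fin.last n) := by
        apply Fin.ext
        rw [fv_val hs (by have := (x (Fin.last n)).isLt; omega)]
      rw [this] at hxh
      rwa [Fin.snoc_init_self] at hxh
    · exact bind_pairwise hs (fun c hc => (hDg c hc).2.1) hDpw


lemma antichain_card_le {s : ℕ} (hs : 0 < s) (n : ℕ) (A : Finset (Fin n → Fin s))
    (hA : ∀ x ∈ A, ∀ y ∈ A, x ≤ y → x = y) :
    A.card ≤ (Finset.univ.filter
      (fun x : Fin n → Fin s => ∑ i, (x i : ℕ) = n * (s - 1) / 2)).card := by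
  classical
  obtain ⟨D, hDg, hDcov, hDpw⟩ := exists_goodDecomp hs n
  choose cf hcfD hcfmem using hDcov
  have hmid : ∀ x : Fin n → Fin s, ∃ m ∈ cf x, rk m = n * (s - 1) / 2 := by
    intro x
    obtain ⟨hne, hch, hsym⟩ := hDg (cf x) (hcfD x)
    have hsum : rk ((cf x).head hne) + rk ((cf x).getLast hne) = n * (s - 1) :=
      hsym _ (List.head?_eq_head hne ▸ rfl) _ (List.getLast?_eq_getLast hne ▸ rfl)
    have hle := rk_head_le_getLast hne hch
    exact exists_mid hne hch _ (by omega) (by omega)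
  choose mf hmf hmfrk using hmid
  apply Finset.card_le_card_of_injOn mf
  · intro a _
    refine Finset.mem_filter.mpr ⟨Finset.mem_univ _, ?_⟩
    exact hmfrk a
  · intro x hx y hy hxy
    rw [Finset.mem_coe] at hx hy
    have hcc : cf x = cf y := by
      by_contra hnecc
      haveI : Std.Symm (Disj (β := Fin n → Fin s)) := ⟨by intro c d h z h1 h2; exact h z h2 h1⟩
      have hdisj : Disj (cf x) (cf y) :=
        hDpw.forall (hcfD x) (hcfD y) hnecc
      exact hdisj (mf x) (hmf x) (hxy ▸ hmf y)
    by_cases hxy2 : x = y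
    · exact hxy2
    · obtain ⟨-, hch, -⟩ := hDg (cf x) (hcfD x)
      have hp : (cf x).Pairwise (fun a b => a ≤ b ∨ b ≤ a) :=
        ((List.isChain_iff_pairwise (R := (LE.le : (Fin n → Fin s) → _ → Prop))).mp
          (List.IsChain.imp (fun a b h => h.1) hch)).imp Or.inl
      haveI : Std.Symm (fun a b : Fin n → Fin s => a ≤ b ∨ b ≤ a) := ⟨fun a b h => Or.symm h⟩
      have hcmp := hp.forall (hcfmem x) (hcc ▸ hcfmem y) hxy2
      rcases hcmp with h | h
      · exact hA x hx y hy h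
      · exact (hA y hy x hx h).symm


lemma count2 (n k : ℕ) :
    (Finset.univ.filter (fun x : Fin n → Fin 2 => ∑ i, (x i : ℕ) = k)).card
      = n.choose k := by
  classical
  have : (Finset.univ.filter (fun x : Fin n → Fin 2 => ∑ i, (x i : ℕ) = k)).card
      = (Finset.powersetCard k (Finset.univ : Finset (Fin n))).card := by
    apply Finset.card_bij (fun x _ => Finset.univ.filter (fun i => x i = 1))
    · intro x hx
      rw [Finset.mem_powersetCard]
      refine ⟨Finset.filter_subset _ _, ?_⟩
      rw [Finset.card_filter]
      have hxk := (Finset.mem_filter.mp hx).2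
      rw [← hxk]
      apply Finset.sum_congr rfl
      intro i _
      have : ∀ a : Fin 2, (if a = 1 then 1 else 0) = (a : ℕ) := by decide
      exact this (x i)
    · intro x hx y hy hfeq
      funext i
      have hiff : (x i = 1) ↔ (y i = 1) := by
        constructor
        · intro h
          have : i ∈ Finset.univ.filter (fun i => y i = 1) := hfeq ▸
            Finset.mem_filter.mpr ⟨Finset.mem_univ _, h⟩
          exact (Finset.mem_filter.mp this).2
        · intro h
          have : i ∈ Finset.univ.filter (fun i => x i = 1) := hfeq ▸
            Finset.mem_filter.mpr ⟨Finset.mem_univ _, h⟩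
          exact (Finset.mem_filter.mp this).2
      have : ∀ a b : Fin 2, ((a = 1) ↔ (b = 1)) → a = b := by decide
      exact this _ _ hiff
    · intro S hS
      rw [Finset.mem_powersetCard] at hS
      refine ⟨fun i => if i ∈ S then 1 else 0, ?_, ?_⟩
      · refine Finset.mem_filter.mpr ⟨Finset.mem_univ _, ?_⟩
        have hc : ∑ i : Fin n, (((fun i => if i ∈ S then (1 : Fin 2) else 0) i : Fin 2) : ℕ)
            = ∑ i : Fin n, (if i ∈ S then 1 else 0) := by
          refine Finset.sum_congr rfl (fun i _ => ?_)
          by_cases h : i ∈ S <;> simp [h]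
        rw [hc, Finset.sum_ite_mem, Finset.univ_inter, Finset.sum_const,
          smul_eq_mul, mul_one]
        exact hS.2
      · ext i
        simp only [Finset.mem_filter, Finset.mem_univ, true_and]
        constructor
        · intro h
          by_contra hi
          rw [if_neg hi] at h
          exact absurd h (by decide)
        · intro h
          rw [if_pos h]
  rw [this, Finset.card_powersetCard, Finset.card_univ, Fintype.card_fin]

/-- the extremal function -/
def extremalF {n s : ℕ} (hs : 0 < s) (x : Fin n → Fin s) (i : Fin n) : Fin s :=
  ⟨min (s - 1) (n * (s - 1) / 2 - ∑ j ∈ Finset.univ.erase i, (x j : ℕ)), by omega⟩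

lemma extremalF_mem {n s : ℕ} (hs : 0 < s) : memFnegClique (extremalF (n := n) hs) := by
  intro i x y h
  have hsum : ∑ j ∈ Finset.univ.erase i, (y j : ℕ) ≤ ∑ j ∈ Finset.univ.erase i, (x j : ℕ) :=
    Finset.sum_le_sum (fun j hj => h j (Finset.mem_erase.mp hj).1)
  show (extremalF hs x i : ℕ) ≤ (extremalF hs y i : ℕ)
  simp only [extremalF]
  have := Nat.sub_le_sub_left hsum (n * (s - 1) / 2)
  omega

lemma extremalF_fix {n s : ℕ} (hs : 0 < s) (x : Fin n → Fin s) :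
    extremalF hs x = x ↔ ∑ i, (x i : ℕ) = n * (s - 1) / 2 := by
  set T := ∑ i, (x i : ℕ) with hT
  set N := n * (s - 1) with hN
  have hE : ∀ i, ∑ j ∈ Finset.univ.erase i, (x j : ℕ) = T - (x i : ℕ) := by
    intro i
    have h := Finset.add_sum_erase Finset.univ (fun j => ((x j : ℕ))) (Finset.mem_univ i)
    omega
  have hxle : ∀ i, (x i : ℕ) ≤ T := by
    intro i
    exact Finset.single_le_sum (f := fun j => ((x j : ℕ))) (fun j _ => Nat.zero_le _)
      (Finset.mem_univ i)
  constructor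
  · intro hfix
    have hi : ∀ i, min (s - 1) (N / 2 - (T - (x i : ℕ))) = (x i : ℕ) := by
      intro i
      have := congrArg (fun z => (z i : ℕ)) hfix
      simpa [extremalF, hE i] using this
    by_contra hTw
    rcases Nat.lt_or_ge T (N / 2) with hlt | hge
    · -- all coords must be s-1
      have hall : ∀ i, (x i : ℕ) = s - 1 := by
        intro i
        have h1 := hi i
        have h2 := hxle i
        omega
      have : T = N := by
        rw [hT, hN, Finset.sum_congr rfl (fun i _ => hall i), Finset.sum_const,
          Finset.card_univ, Fintype.card_fin, smul_eq_mul]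
      omega
    · have hgt : T > N / 2 := by omega
      have hex : ∃ i, 0 < (x i : ℕ) := by
        by_contra hno
        push_neg at hno
        have : T = 0 := by
          rw [hT]
          exact Finset.sum_eq_zero (fun i _ => by have := hno i; omega)
        omega
      obtain ⟨i, hipos⟩ := hex
      have h1 := hi i
      have h2 := hxle i
      omega
  · intro hTw
    funext i
    apply Fin.ext
    show min (s - 1) (N / 2 - ∑ j ∈ Finset.univ.erase i, (x j : ℕ)) = (x i : ℕ)
    rw [hE i]
    have h2 := hxle i
    have h3 := (x i).isLt
    omega

end Stmt9Aux


/-- the maximum number of fixed points of a network on the negative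
clique `K_n^-` equals `|B(n, ⌊n(s−1)/2⌋, s)|`, the size of the middle layer of
`[s]^n`; in particular for `s = 2` it equals `C(n, ⌊n/2⌋)`. -/
theorem stmt9 (n s : ℕ) (hn : 1 ≤ n) (hs : 2 ≤ s) :
    IsGreatest {m : ℕ | ∃ f : (Fin n → Fin s) → Fin n → Fin s,
        memFnegClique f ∧ m = Set.ncard {x | f x = x}}
      (Finset.univ.filter
        (fun x : Fin n → Fin s => ∑ i, (x i : ℕ) = n * (s - 1) / 2)).card ∧
    (s = 2 →
      (Finset.univ.filter
        (fun x : Fin n → Fin s => ∑ i, (x i : ℕ) = n * (s - 1) / 2)).card =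
        n.choose (n / 2)) := by
  have hs0 : 0 < s := by omega
  constructor
  · constructor
    · -- membership : the extremal function attains the middle layer size
      refine ⟨Stmt9Aux.extremalF hs0, Stmt9Aux.extremalF_mem hs0, ?_⟩
      have hset : {x : Fin n → Fin s | Stmt9Aux.extremalF hs0 x = x}
          = ↑(Finset.univ.filter
            (fun x : Fin n → Fin s => ∑ i, (x i : ℕ) = n * (s - 1) / 2)) := by
        ext x
        simp [Stmt9Aux.extremalF_fix hs0 x]
      rw [hset, Set.ncard_coe_finset]
    · -- upper bound : fixed points form an antichain
      rintro m ⟨f, hf, rfl⟩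
      have hset : {x : Fin n → Fin s | f x = x}
          = ↑(Finset.univ.filter (fun x : Fin n → Fin s => f x = x)) := by
        ext x; simp
      rw [hset, Set.ncard_coe_finset]
      apply Stmt9Aux.antichain_card_le hs0
      intro x hx y hy hxy
      have hfx : f x = x := (Finset.mem_filter.mp hx).2
      have hfy : f y = y := (Finset.mem_filter.mp hy).2
      funext i
      apply le_antisymm (hxy i)
      have h := hf i y x (fun j _ => hxy j)
      rwa [hfx, hfy] at h
  · rintro rfl
    rw [Stmt9Aux.count2 n (n * (2 - 1) / 2), show n * (2 - 1) / 2 = n / 2 by omega]
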